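/- Let N be odd and a, b binary sequences of period N. Then the cross-correlation between the period-2N sequences u = a ∥ L^{(N+1)/2}(ā) and v = b ∥ L^{(N+1)/2}(b) is identically zero: R_{u,v}(τ) = 0 and R_{v,u}(τ) = 0 for all τ. -/

import Mathlib

/-- Periodic cross-correlation of binary sequences of period `M`. -/
def corr (M : ℕ) (x y : ZMod M → ZMod 2) (τ : ZMod M) : ℤ :=
  ∑ t ∈ Finset.range M, (-1 : ℤ) ^ ((x (t : ZMod M)).val + (y ((t : ZMod M) + τ)).val)

/-- Interleaving of two sequences: `(a∥b)(2i)=a(i)`, `(a∥b)(2i+1)=b(i)`. -/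
def il (N : ℕ) (a b : ZMod N → ZMod 2) : ZMod (2 * N) → ZMod 2 :=
  fun t => if t.val % 2 = 0 then a ((t.val / 2 : ℕ) : ZMod N)
           else b ((t.val / 2 : ℕ) : ZMod N)

lemma il_shift (N : ℕ) (hN : Odd N) (a b : ZMod N → ZMod 2) (x : ZMod (2 * N)) :
    il N a b (x + (N : ZMod (2 * N))) =
      il N (fun i => b (i + ((N / 2 : ℕ) : ZMod N)))
           (fun i => a (i + (((N + 1) / 2 : ℕ) : ZMod N))) x := by
  have hN2 : N % 2 = 1 := Nat.odd_iff.mp hN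
  have hN0 : 0 < N := by omega
  haveI : NeZero (2 * N) := ⟨by omega⟩
  have hklt : x.val < 2 * N := ZMod.val_lt x
  have hval : (x + (N : ZMod (2 * N))).val = (x.val + N) % (2 * N) := by
    rw [ZMod.val_add, ZMod.val_natCast_of_lt (by omega)]
  unfold il
  rcases Nat.lt_or_ge x.val N with h1 | h1
  · have hval' : (x + (N : ZMod (2 * N))).val = x.val + N := by
      rw [hval, Nat.mod_eq_of_lt (by omega)]
    rcases Nat.even_or_odd x.val with h2 | h2
    · have h2' : x.val % 2 = 0 := Nat.even_iff.mp h2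
      rw [hval', if_neg (by omega), if_pos h2']
      show b _ = b ((((x.val / 2 : ℕ)) : ZMod N) + ((N / 2 : ℕ) : ZMod N))
      rw [← Nat.cast_add, show x.val / 2 + N / 2 = (x.val + N) / 2 from by omega]
    · have h2' : x.val % 2 = 1 := Nat.odd_iff.mp h2
      rw [hval', if_pos (by omega), if_neg (by omega)]
      show a _ = a ((((x.val / 2 : ℕ)) : ZMod N) + (((N + 1) / 2 : ℕ) : ZMod N))
      rw [← Nat.cast_add, show x.val / 2 + (N + 1) / 2 = (x.val + N) / 2 from by omega]
  · have hval' : (x + (N : ZMod (2 * N))).val = x.val - N := by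
      rw [hval, Nat.mod_eq_sub_mod (by omega),
        show x.val + N - 2 * N = x.val - N from by omega, Nat.mod_eq_of_lt (by omega)]
    rcases Nat.even_or_odd x.val with h2 | h2
    · have h2' : x.val % 2 = 0 := Nat.even_iff.mp h2
      rw [hval', if_neg (by omega), if_pos h2']
      show b _ = b ((((x.val / 2 : ℕ)) : ZMod N) + ((N / 2 : ℕ) : ZMod N))
      rw [← Nat.cast_add,
        show x.val / 2 + N / 2 = (x.val - N) / 2 + N from by omega,
        Nat.cast_add, ZMod.natCast_self, add_zero]
    · have h2' : x.val % 2 = 1 := Nat.odd_iff.mp h2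
      rw [hval', if_pos (by omega), if_neg (by omega)]
      show a _ = a ((((x.val / 2 : ℕ)) : ZMod N) + (((N + 1) / 2 : ℕ) : ZMod N))
      rw [← Nat.cast_add,
        show x.val / 2 + (N + 1) / 2 = (x.val - N) / 2 + N from by omega,
        Nat.cast_add, ZMod.natCast_self, add_zero]

lemma il_one_sub (N : ℕ) (a b : ZMod N → ZMod 2) (x : ZMod (2 * N)) :
    il N (fun i => 1 - a i) (fun i => 1 - b i) x = 1 - il N a b x := by
  unfold il
  split <;> rfl

lemma sign_left (x : ZMod 2) (k : ℕ) :
    (-1 : ℤ) ^ ((1 - x).val + k) = -(-1 : ℤ) ^ (x.val + k) := by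
  fin_cases x <;>
    simp [pow_add, show (1 : ZMod 2).val = 1 from rfl, show (0 : ZMod 2).val = 0 from rfl,
      show ((1 : ZMod 2) - 0).val = 1 from rfl, show ((1 : ZMod 2) - 1).val = 0 from rfl, pow_succ] <;>
    erw [show ((1 : ZMod 2) - 0).val = 1 from rfl, show ((1 : ZMod 2) - 1).val = 0 from rfl] <;> simp [pow_succ]


lemma sign_right (x : ZMod 2) (k : ℕ) :
    (-1 : ℤ) ^ (k + (1 - x).val) = -(-1 : ℤ) ^ (k + x.val) := by
  fin_cases x <;>
    simp [pow_add, show (1 : ZMod 2).val = 1 from rfl, show (0 : ZMod 2).val = 0 from rfl,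
      show ((1 : ZMod 2) - 0).val = 1 from rfl, show ((1 : ZMod 2) - 1).val = 0 from rfl, pow_succ] <;>
    erw [show ((1 : ZMod 2) - 0).val = 1 from rfl, show ((1 : ZMod 2) - 1).val = 0 from rfl] <;> simp [pow_succ]


theorem stmt_12 (N : ℕ) (hN : Odd N) (a b : ZMod N → ZMod 2)
    (u v : ZMod (2 * N) → ZMod 2)
    (hu : u = il N a (fun t => 1 - a (t + (((N + 1) / 2 : ℕ) : ZMod N))))
    (hv : v = il N b (fun t => b (t + (((N + 1) / 2 : ℕ) : ZMod N))))
    (τ : ZMod (2 * N)) :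
    corr (2 * N) u v τ = 0 ∧ corr (2 * N) v u τ = 0 := by
  have hN2 : N % 2 = 1 := Nat.odd_iff.mp hN
  have hhalf : ((N / 2 : ℕ) : ZMod N) + (((N + 1) / 2 : ℕ) : ZMod N) = 0 := by
    rw [← Nat.cast_add, show N / 2 + (N + 1) / 2 = N from by omega, ZMod.natCast_self]
  have hu' : ∀ x : ZMod (2 * N), u (x + (N : ZMod (2 * N))) = 1 - u x := by
    intro x
    rw [hu, il_shift N hN]
    have e1 : (fun i : ZMod N => (fun t => 1 - a (t + (((N + 1) / 2 : ℕ) : ZMod N)))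
        (i + ((N / 2 : ℕ) : ZMod N))) = fun i => 1 - a i := by
      funext i
      simp only
      rw [add_assoc, hhalf, add_zero]
    have e2 : (fun i : ZMod N => a (i + (((N + 1) / 2 : ℕ) : ZMod N))) =
        fun i => 1 - (1 - a (i + (((N + 1) / 2 : ℕ) : ZMod N))) := by
      funext i; ring
    rw [e1, e2, il_one_sub]
  have hv' : ∀ x : ZMod (2 * N), v (x + (N : ZMod (2 * N))) = v x := by
    intro x
    rw [hv, il_shift N hN]
    have e1 : (fun i : ZMod N => (fun t => b (t + (((N + 1) / 2 : ℕ) : ZMod N)))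
        (i + ((N / 2 : ℕ) : ZMod N))) = fun i => b i := by
      funext i
      simp only
      rw [add_assoc, hhalf, add_zero]
    rw [e1]
  have hcast : ∀ t : ℕ, ((N + t : ℕ) : ZMod (2 * N)) = (t : ZMod (2 * N)) + (N : ZMod (2 * N)) := by
    intro t; push_cast; ring
  constructor
  · unfold corr
    rw [show Finset.range (2 * N) = Finset.range (N + N) from by rw [two_mul],
      Finset.sum_range_add]
    have key : ∀ t ∈ Finset.range N,
        (-1 : ℤ) ^ ((u ((N + t : ℕ) : ZMod (2 * N))).val
            + (v (((N + t : ℕ) : ZMod (2 * N)) + τ)).val)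
          = -(-1 : ℤ) ^ ((u (t : ZMod (2 * N))).val + (v ((t : ZMod (2 * N)) + τ)).val) := by
      intro t _
      rw [hcast t, hu', add_right_comm _ (N : ZMod (2 * N)) τ, hv', sign_left]
    rw [Finset.sum_congr rfl key, Finset.sum_neg_distrib]
    simp
  · unfold corr
    rw [show Finset.range (2 * N) = Finset.range (N + N) from by rw [two_mul],
      Finset.sum_range_add]
    have key : ∀ t ∈ Finset.range N,
        (-1 : ℤ) ^ ((v ((N + t : ℕ) : ZMod (2 * N))).val
            + (u (((N + t : ℕ) : ZMod (2 * N)) + τ)).val)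
          = -(-1 : ℤ) ^ ((v (t : ZMod (2 * N))).val + (u ((t : ZMod (2 * N)) + τ)).val) := by
      intro t _
      rw [hcast t, hv', add_right_comm _ (N : ZMod (2 * N)) τ, hu', sign_right]
    rw [Finset.sum_congr rfl key, Finset.sum_neg_distrib]
    simp
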